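/- Under the hypotheses of the TRA survivor bound applied to each of two views (each view has relevant survivors bounded by r deterministically and expected noise survivors at most κ), the differential attention vector Δa_i = a_i^{(1)} - λ·a_i^{(2)} satisfies E[H(Δa_i)] ≤ log(1 + 2(r + κ)), and hence lim_{i→∞} E[H(Δa_i)]/log i = 0. -/

import Mathlib

open MeasureTheory
open scoped Classical

/-- Effective entropy: Shannon entropy of the ℓ1-normalized absolute values of a vector
(taken to be 0 when the vector is 0). -/
noncomputable def effEntropy {n : ℕ} (a : Fin n → ℝ) : ℝ :=
  if (∑ j, |a j|) = 0 then 0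
  else -∑ j, (|a j| / ∑ k, |a k|) * Real.log (|a j| / ∑ k, |a k|)

lemma effEntropy_eq_sum {n : ℕ} (a : Fin n → ℝ) (h : (∑ j, |a j|) ≠ 0) :
    effEntropy a = ∑ j, Real.negMulLog (|a j| / ∑ k, |a k|) := by
  unfold effEntropy
  rw [if_neg h, ← Finset.sum_neg_distrib]
  refine Finset.sum_congr rfl fun j _ => ?_
  simp [Real.negMulLog]

lemma effEntropy_nonneg {n : ℕ} (a : Fin n → ℝ) : 0 ≤ effEntropy a := by
  by_cases h : (∑ j, |a j|) = 0
  · unfold effEntropy; rw [if_pos h]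
  · have hS : 0 < ∑ k, |a k| :=
      lt_of_le_of_ne (Finset.sum_nonneg fun _ _ => abs_nonneg _) (Ne.symm h)
    rw [effEntropy_eq_sum a h]
    refine Finset.sum_nonneg fun j _ => Real.negMulLog_nonneg ?_ ?_
    · positivity
    · exact div_le_one_of_le₀ (Finset.single_le_sum (fun k _ => abs_nonneg (a k))
        (Finset.mem_univ j)) hS.le

lemma effEntropy_le_log {n : ℕ} (a : Fin n → ℝ) :
    effEntropy a ≤ Real.log (1 + ((Finset.univ.filter fun j => a j ≠ 0).card : ℝ)) := by
  set T := Finset.univ.filter fun j => a j ≠ 0 with hT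
  have hcard : (0:ℝ) ≤ (T.card : ℝ) := Nat.cast_nonneg _
  by_cases h : (∑ j, |a j|) = 0
  · unfold effEntropy; rw [if_pos h]
    exact Real.log_nonneg (by linarith)
  · have hS : 0 < ∑ k, |a k| :=
      lt_of_le_of_ne (Finset.sum_nonneg fun _ _ => abs_nonneg _) (Ne.symm h)
    set p : Fin n → ℝ := fun j => |a j| / ∑ k, |a k| with hp
    have hTne : T.Nonempty := by
      by_contra hne
      rw [Finset.not_nonempty_iff_eq_empty, Finset.filter_eq_empty_iff] at hne
      exact h (Finset.sum_eq_zero fun j _ => by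
        simpa using hne (Finset.mem_univ j))
    have hm : 0 < (T.card : ℝ) := Nat.cast_pos.mpr (Finset.card_pos.mpr hTne)
    have hrestrict : ∀ j ∈ Finset.univ, j ∉ T → Real.negMulLog (p j) = 0 := by
      intro j _ hj
      have : a j = 0 := by simpa [hT] using hj
      simp [hp, this]
    have hsum1 : ∑ j ∈ T, p j = 1 := by
      rw [Finset.sum_subset (Finset.subset_univ T)
        (fun j hj hjn => by
          have : a j = 0 := by simpa [hT] using hjn
          simp [hp, this])]
      rw [hp, ← Finset.sum_div, div_self h]
    have hEq : effEntropy a = ∑ j ∈ T, Real.negMulLog (p j) := by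
      rw [effEntropy_eq_sum a h,
        ← Finset.sum_subset (Finset.subset_univ T) hrestrict]
    have key : ∑ j ∈ T, Real.negMulLog (p j) ≤ Real.log (T.card : ℝ) := by
      have h1 : ∀ j ∈ T, Real.negMulLog (p j) - p j * Real.log (T.card : ℝ)
          ≤ 1/(T.card : ℝ) - p j := by
        intro j hj
        have haj : a j ≠ 0 := by simpa [hT] using hj
        have hpj : 0 < p j := div_pos (abs_pos.mpr haj) hS
        have hlog : Real.log (((T.card : ℝ) * p j)⁻¹) ≤ ((T.card : ℝ) * p j)⁻¹ - 1 :=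
          Real.log_le_sub_one_of_pos (by positivity)
        have heq : Real.negMulLog (p j) - p j * Real.log (T.card : ℝ)
            = p j * Real.log (((T.card : ℝ) * p j)⁻¹) := by
          rw [Real.log_inv, Real.log_mul hm.ne' hpj.ne']
          simp [Real.negMulLog]; ring
        rw [heq]
        calc p j * Real.log (((T.card:ℝ) * p j)⁻¹)
            ≤ p j * (((T.card:ℝ) * p j)⁻¹ - 1) := mul_le_mul_of_nonneg_left hlog hpj.le
          _ = 1/(T.card:ℝ) - p j := by field_simp
      have h2 := Finset.sum_le_sum h1
      rw [Finset.sum_sub_distrib, Finset.sum_sub_distrib, ← Finset.sum_mul, hsum1,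
        one_mul, Finset.sum_const, nsmul_eq_mul] at h2
      have : (T.card : ℝ) * (1/(T.card:ℝ)) = 1 := by field_simp
      linarith
    rw [hEq]
    exact key.trans (Real.log_le_log hm (by linarith))

lemma measurable_effEntropy {n : ℕ} : Measurable (effEntropy (n := n)) := by
  unfold effEntropy
  have hs : Measurable fun a : Fin n → ℝ => ∑ k, |a k| :=
    Finset.measurable_sum _ fun k _ => (measurable_pi_apply k).abs
  refine Measurable.ite (measurableSet_eq_fun hs measurable_const) measurable_const ?_
  refine Measurable.neg (Finset.measurable_sum _ fun j _ => ?_)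
  exact (((measurable_pi_apply j).abs).div hs).mul
    (Real.measurable_log.comp (((measurable_pi_apply j).abs).div hs))

/-- **Corollary 4.7 (TDA is non-dispersive).** If each of the two views has at most r
relevant survivors deterministically and expected noise survivors at most κ, then the
differential vector Δa_i = a_i⁽¹⁾ - λ·a_i⁽²⁾ satisfies E[H(Δa_i)] ≤ log(1 + 2(r+κ)),
and hence E[H(Δa_i)]/log i → 0. -/
theorem tda_non_dispersive {Ω : Type*} [MeasurableSpace Ω]
    (μ : Measure Ω) [IsProbabilityMeasure μ]
    (a₁ a₂ : (i : ℕ) → Ω → (Fin i → ℝ)) (lam : ℝ) (r κ : ℝ)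
    (R₁ N₁ R₂ N₂ : (i : ℕ) → Ω → ℕ)
    (hmeas₁ : ∀ i, Measurable (a₁ i)) (hmeas₂ : ∀ i, Measurable (a₂ i))
    (hint₁ : ∀ i, Integrable (fun ω => (N₁ i ω : ℝ)) μ)
    (hint₂ : ∀ i, Integrable (fun ω => (N₂ i ω : ℝ)) μ)
    (hsplit₁ : ∀ i ω, (Finset.univ.filter fun j => a₁ i ω j ≠ 0).card = R₁ i ω + N₁ i ω)
    (hsplit₂ : ∀ i ω, (Finset.univ.filter fun j => a₂ i ω j ≠ 0).card = R₂ i ω + N₂ i ω)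
    (hR₁ : ∀ i ω, (R₁ i ω : ℝ) ≤ r) (hR₂ : ∀ i ω, (R₂ i ω : ℝ) ≤ r)
    (hN₁ : ∀ i, ∫ ω, (N₁ i ω : ℝ) ∂μ ≤ κ) (hN₂ : ∀ i, ∫ ω, (N₂ i ω : ℝ) ∂μ ≤ κ) :
    (∀ i : ℕ, ∫ ω, effEntropy (fun j => a₁ i ω j - lam * a₂ i ω j) ∂μ
        ≤ Real.log (1 + 2 * (r + κ)))
    ∧ Filter.Tendsto
        (fun i : ℕ =>
          (∫ ω, effEntropy (fun j => a₁ i ω j - lam * a₂ i ω j) ∂μ) / Real.log i)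
        Filter.atTop (nhds 0) := by
  have hΩ : Nonempty Ω := by
    by_contra hE
    rw [not_nonempty_iff] at hE
    have h1 : μ Set.univ = 1 := measure_univ
    rw [Set.univ_eq_empty_iff.mpr hE, measure_empty] at h1
    exact zero_ne_one h1
  obtain ⟨ω₀⟩ := hΩ
  have hr : 0 ≤ r := le_trans (Nat.cast_nonneg _) (hR₁ 0 ω₀)
  have hκ : 0 ≤ κ := le_trans (integral_nonneg fun ω => Nat.cast_nonneg _) (hN₁ 0)
  have h1c : (0:ℝ) < 1 + 2*(r+κ) := by linarith
  have main : ∀ i : ℕ, ∫ ω, effEntropy (fun j => a₁ i ω j - lam * a₂ i ω j) ∂μ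
      ≤ Real.log (1 + 2 * (r + κ)) := by
    intro i
    set c : ℝ := 2*(r+κ) with hcdef
    set Δ : Ω → Fin i → ℝ := fun ω j => a₁ i ω j - lam * a₂ i ω j with hΔ
    have hΔmeas : Measurable Δ := by
      apply measurable_pi_lambda
      intro j
      exact ((measurable_pi_apply j).comp (hmeas₁ i)).sub
        (((measurable_pi_apply j).comp (hmeas₂ i)).const_mul lam)
    set c₁ : Ω → ℝ := fun ω => ((Finset.univ.filter fun j => a₁ i ω j ≠ 0).card : ℝ) with hc₁
    set c₂ : Ω → ℝ := fun ω => ((Finset.univ.filter fun j => a₂ i ω j ≠ 0).card : ℝ) with hc₂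
    have hcmeas : ∀ (b : Ω → Fin i → ℝ), Measurable b →
        Measurable (fun ω => ((Finset.univ.filter fun j => b ω j ≠ 0).card : ℝ)) := by
      intro b hb
      have : (fun ω => ((Finset.univ.filter fun j => b ω j ≠ 0).card : ℝ))
          = fun ω => ∑ j, if b ω j ≠ 0 then (1:ℝ) else 0 := by
        funext ω; rw [Finset.sum_boole]
      rw [this]
      refine Finset.measurable_sum _ fun j _ => Measurable.ite ?_ measurable_const
        measurable_const
      exact ((((measurable_pi_apply j).comp hb) (measurableSet_singleton 0)).compl)
    have hcint : ∀ (b : Ω → Fin i → ℝ), Measurable b →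
        Integrable (fun ω => ((Finset.univ.filter fun j => b ω j ≠ 0).card : ℝ)) μ := by
      intro b hb
      refine Integrable.mono' (integrable_const (i:ℝ)) ((hcmeas b hb).aestronglyMeasurable)
        (Filter.Eventually.of_forall fun ω => ?_)
      rw [Real.norm_eq_abs, abs_of_nonneg (Nat.cast_nonneg _)]
      exact_mod_cast (Finset.card_filter_le _ _).trans_eq (Finset.card_fin i)
    have hc₁int : Integrable c₁ μ := hcint _ (hmeas₁ i)
    have hc₂int : Integrable c₂ μ := hcint _ (hmeas₂ i)
    have hR1eq : (fun ω => (R₁ i ω : ℝ)) = fun ω => c₁ ω - (N₁ i ω : ℝ) := by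
      funext ω
      have := hsplit₁ i ω
      simp only [hc₁]
      rw [this]; push_cast; ring
    have hR2eq : (fun ω => (R₂ i ω : ℝ)) = fun ω => c₂ ω - (N₂ i ω : ℝ) := by
      funext ω
      have := hsplit₂ i ω
      simp only [hc₂]
      rw [this]; push_cast; ring
    have hR1int : Integrable (fun ω => (R₁ i ω : ℝ)) μ := by
      rw [hR1eq]; exact hc₁int.sub (hint₁ i)
    have hR2int : Integrable (fun ω => (R₂ i ω : ℝ)) μ := by
      rw [hR2eq]; exact hc₂int.sub (hint₂ i)
    set X : Ω → ℝ := fun ω => c₁ ω + c₂ ω with hX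
    have hXint : Integrable X μ := hc₁int.add hc₂int
    have hc₁eq : ∫ ω, c₁ ω ∂μ = (∫ ω, (R₁ i ω : ℝ) ∂μ) + ∫ ω, (N₁ i ω : ℝ) ∂μ := by
      rw [← integral_add hR1int (hint₁ i)]
      refine integral_congr_ae (Filter.Eventually.of_forall fun ω => ?_)
      simp only [hc₁]
      rw [hsplit₁ i ω]; push_cast; ring
    have hc₂eq : ∫ ω, c₂ ω ∂μ = (∫ ω, (R₂ i ω : ℝ) ∂μ) + ∫ ω, (N₂ i ω : ℝ) ∂μ := by
      rw [← integral_add hR2int (hint₂ i)]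
      refine integral_congr_ae (Filter.Eventually.of_forall fun ω => ?_)
      simp only [hc₂]
      rw [hsplit₂ i ω]; push_cast; ring
    have hIR1 : ∫ ω, (R₁ i ω : ℝ) ∂μ ≤ r := by
      calc ∫ ω, (R₁ i ω : ℝ) ∂μ ≤ ∫ _, r ∂μ :=
            integral_mono hR1int (integrable_const r) (hR₁ i)
        _ = r := by simp
    have hIR2 : ∫ ω, (R₂ i ω : ℝ) ∂μ ≤ r := by
      calc ∫ ω, (R₂ i ω : ℝ) ∂μ ≤ ∫ _, r ∂μ :=
            integral_mono hR2int (integrable_const r) (hR₂ i)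
        _ = r := by simp
    have hXle : ∫ ω, X ω ∂μ ≤ c := by
      rw [hX, integral_add hc₁int hc₂int, hc₁eq, hc₂eq, hcdef]
      linarith [hN₁ i, hN₂ i]
    have hXnn : ∀ ω, 0 ≤ X ω := fun ω =>
      add_nonneg (Nat.cast_nonneg _) (Nat.cast_nonneg _)
    -- pointwise bound
    have hsub : ∀ ω, ((Finset.univ.filter fun j => Δ ω j ≠ 0).card : ℝ) ≤ X ω := by
      intro ω
      have hsubs : (Finset.univ.filter fun j => Δ ω j ≠ 0) ⊆
          (Finset.univ.filter fun j => a₁ i ω j ≠ 0) ∪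
          (Finset.univ.filter fun j => a₂ i ω j ≠ 0) := by
        intro j hj
        simp only [Finset.mem_filter, Finset.mem_union, Finset.mem_univ, true_and] at hj ⊢
        by_contra hcon
        push_neg at hcon
        obtain ⟨h1, h2⟩ := hcon
        exact hj (by simp [hΔ, h1, h2])
      have := (Finset.card_le_card hsubs).trans (Finset.card_union_le _ _)
      simp only [hX, hc₁, hc₂]
      exact_mod_cast this
    have hpt : ∀ ω, effEntropy (Δ ω) ≤ Real.log (1+c) + (X ω - c)/(1+c) := by
      intro ω
      have h1 : effEntropy (Δ ω) ≤
          Real.log (1 + ((Finset.univ.filter fun j => Δ ω j ≠ 0).card : ℝ)) :=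
        effEntropy_le_log _
      have h2 : Real.log (1 + ((Finset.univ.filter fun j => Δ ω j ≠ 0).card : ℝ))
          ≤ Real.log (1 + X ω) :=
        Real.log_le_log (by positivity) (by linarith [hsub ω])
      have h3 : Real.log (1 + X ω) ≤ Real.log (1+c) + ((1 + X ω)/(1+c) - 1) := by
        have hd := Real.log_le_sub_one_of_pos
          (show 0 < (1 + X ω)/(1+c) by positivity)
        rw [Real.log_div (by linarith [hXnn ω]) (by linarith)] at hd
        linarith
      have h4 : (1 + X ω)/(1+c) - 1 = (X ω - c)/(1+c) := by
        field_simp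
        ring
      linarith
    -- integrability of entropy
    have hfmeas : Measurable (fun ω => effEntropy (Δ ω)) :=
      measurable_effEntropy.comp hΔmeas
    have hfint : Integrable (fun ω => effEntropy (Δ ω)) μ := by
      refine Integrable.mono' (integrable_const (Real.log (1 + (i:ℝ))))
        hfmeas.aestronglyMeasurable (Filter.Eventually.of_forall fun ω => ?_)
      rw [Real.norm_eq_abs, abs_of_nonneg (effEntropy_nonneg _)]
      refine (effEntropy_le_log _).trans (Real.log_le_log (by positivity) ?_)
      have : ((Finset.univ.filter fun j => Δ ω j ≠ 0).card : ℝ) ≤ (i:ℝ) := by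
        exact_mod_cast (Finset.card_filter_le _ _).trans_eq (Finset.card_fin i)
      linarith
    have hgint : Integrable (fun ω => Real.log (1+c) + (X ω - c)/(1+c)) μ :=
      (integrable_const _).add ((hXint.sub (integrable_const c)).div_const (1+c))
    have hle : ∫ ω, effEntropy (Δ ω) ∂μ
        ≤ ∫ ω, (Real.log (1+c) + (X ω - c)/(1+c)) ∂μ :=
      integral_mono hfint hgint hpt
    have heval : ∫ ω, (Real.log (1+c) + (X ω - c)/(1+c)) ∂μ
        = Real.log (1+c) + ((∫ ω, X ω ∂μ) - c)/(1+c) := by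
      have hint : Integrable (fun ω => (X ω - c)/(1+c)) μ := by
        simpa using (hXint.sub (integrable_const c)).div_const (1+c)
      rw [integral_add (integrable_const _) hint, integral_const]
      have : ∫ ω, (X ω - c)/(1+c) ∂μ = ((∫ ω, X ω ∂μ) - c)/(1+c) := by
        rw [integral_div, integral_sub hXint (integrable_const c), integral_const]
        simp
      rw [this]; simp
    have hfin : ((∫ ω, X ω ∂μ) - c)/(1+c) ≤ 0 :=
      div_nonpos_of_nonpos_of_nonneg (by linarith) (by linarith)
    calc ∫ ω, effEntropy (fun j => a₁ i ω j - lam * a₂ i ω j) ∂μ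
        = ∫ ω, effEntropy (Δ ω) ∂μ := rfl
      _ ≤ Real.log (1+c) + ((∫ ω, X ω ∂μ) - c)/(1+c) := heval ▸ hle
      _ ≤ Real.log (1 + 2*(r+κ)) := by rw [hcdef] at *; linarith
  refine ⟨main, ?_⟩
  have hnonneg : ∀ i : ℕ,
      0 ≤ ∫ ω, effEntropy (fun j => a₁ i ω j - lam * a₂ i ω j) ∂μ :=
    fun i => integral_nonneg fun ω => effEntropy_nonneg _
  have htend : Filter.Tendsto (fun i : ℕ => Real.log (1 + 2*(r+κ)) / Real.log i)
      Filter.atTop (nhds 0) :=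
    Filter.Tendsto.div_atTop tendsto_const_nhds
      (Real.tendsto_log_atTop.comp tendsto_natCast_atTop_atTop)
  refine tendsto_of_tendsto_of_tendsto_of_le_of_le' tendsto_const_nhds htend ?_ ?_
  · filter_upwards [Filter.eventually_ge_atTop 1] with i hi
    exact div_nonneg (hnonneg i) (Real.log_natCast_nonneg i)
  · filter_upwards [Filter.eventually_ge_atTop 2] with i hi
    have hlog : 0 < Real.log (i:ℝ) :=
      Real.log_pos (by exact_mod_cast Nat.lt_of_lt_of_le Nat.one_lt_two hi)
    exact div_le_div_of_nonneg_right (main i) hlog.le
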